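/- Let a, b, c ≥ 0 and s > 0, and for P > 0 define f(P) = (a + b·√P + c·P)·(√π/2)·erf(√(s·P))/√(s·P). Then f is nondecreasing on the set {P > 0 : c·P ≥ a} and concave on the set {P > 0 : c·P ≥ 3a}. -/

import Mathlib

/-- The error function `erf(y) = (2/√π)·∫₀^y e^{−u²} du`. -/
noncomputable def erf (y : ℝ) : ℝ := (2 / Real.sqrt Real.pi) * ∫ u in (0:ℝ)..y, Real.exp (-u ^ 2)

open Real MeasureTheory intervalIntegral

noncomputable def Gfun (y : ℝ) : ℝ := ∫ u in (0:ℝ)..y, Real.exp (-u ^ 2)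

lemma gauss_cont : Continuous fun u : ℝ => Real.exp (-u ^ 2) := by continuity

lemma hasDerivAt_Gfun (y : ℝ) : HasDerivAt Gfun (Real.exp (-y ^ 2)) y :=
  intervalIntegral.integral_hasDerivAt_right
    (gauss_cont.intervalIntegrable _ _)
    (gauss_cont.stronglyMeasurableAtFilter _ _)
    gauss_cont.continuousAt

lemma hasDerivAt_sqrt_smul (s : ℝ) (hs : 0 < s) {P : ℝ} (hP : 0 < P) :
    HasDerivAt (fun x : ℝ => Real.sqrt (s * x)) (s / (2 * Real.sqrt (s * P))) P := by
  have hsP : 0 < s * P := mul_pos hs hP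
  have hin : HasDerivAt (fun x : ℝ => s * x) s P := by
    simpa using (hasDerivAt_id P).const_mul s
  have h := (Real.hasDerivAt_sqrt hsP.ne').comp P hin
  refine h.congr_deriv ?_
  field_simp

lemma hasDerivAt_Gcomp (s : ℝ) (hs : 0 < s) {P : ℝ} (hP : 0 < P) :
    HasDerivAt (fun x : ℝ => Gfun (Real.sqrt (s * x)))
      (Real.exp (-(s * P)) * (s / (2 * Real.sqrt (s * P)))) P := by
  have hsP : 0 < s * P := mul_pos hs hP
  have h := (hasDerivAt_Gfun (Real.sqrt (s * P))).comp P (hasDerivAt_sqrt_smul s hs hP)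
  simpa [Real.sq_sqrt hsP.le, Function.comp_def] using h

lemma hasDerivAt_invsqrt (s : ℝ) (hs : 0 < s) {P : ℝ} (hP : 0 < P) :
    HasDerivAt (fun x : ℝ => (Real.sqrt (s * x))⁻¹)
      (-(s / (2 * Real.sqrt (s * P))) / (Real.sqrt (s * P)) ^ 2) P :=
  (hasDerivAt_sqrt_smul s hs hP).inv (Real.sqrt_pos.2 (mul_pos hs hP)).ne'

lemma hasDerivAt_Nfun (a b c : ℝ) {P : ℝ} (hP : 0 < P) :
    HasDerivAt (fun x : ℝ => a + b * Real.sqrt x + c * x)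
      (b * (1 / (2 * Real.sqrt P)) + c) P := by
  have h := ((hasDerivAt_const P a).add
    ((Real.hasDerivAt_sqrt hP.ne').const_mul b)).add ((hasDerivAt_id P).const_mul c)
  simpa [Pi.add_def] using h

lemma hasDerivAt_g (a b c s : ℝ) (hs : 0 < s) {P : ℝ} (hP : 0 < P) :
    HasDerivAt
      (fun x => (a + b * Real.sqrt x + c * x) * Gfun (Real.sqrt (s * x)) / Real.sqrt (s * x))
      (((c * P - a) * Gfun (Real.sqrt (s * P)) / Real.sqrt (s * P)
        + (a + b * Real.sqrt P + c * P) * Real.exp (-(s * P))) / (2 * P)) P := by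
  have hsP : 0 < s * P := mul_pos hs hP
  have hy : 0 < Real.sqrt (s * P) := Real.sqrt_pos.2 hsP
  have hq : 0 < Real.sqrt P := Real.sqrt_pos.2 hP
  have hprod := ((hasDerivAt_Nfun a b c hP).mul (hasDerivAt_Gcomp s hs hP)).mul
    (hasDerivAt_invsqrt s hs hP)
  have heq : (fun x : ℝ =>
      (a + b * Real.sqrt x + c * x) * Gfun (Real.sqrt (s * x)) / Real.sqrt (s * x))
      = fun x => ((a + b * Real.sqrt x + c * x) * Gfun (Real.sqrt (s * x)))
          * (Real.sqrt (s * x))⁻¹ := by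
    funext x; rw [div_eq_mul_inv]
  rw [heq]
  refine hprod.congr_deriv ?_
  simp only [Pi.mul_apply]
  set q := Real.sqrt P with hqdef
  set r := Real.sqrt s with hrdef
  have hyv : Real.sqrt (s * P) = r * q := Real.sqrt_mul hs.le P
  have hq2 : q ^ 2 = P := Real.sq_sqrt hP.le
  have hr2 : r ^ 2 = s := Real.sq_sqrt hs.le
  rw [hyv, show s * P = r ^ 2 * q ^ 2 by rw [hq2, hr2], show P = q ^ 2 from hq2.symm,
    show s = r ^ 2 from hr2.symm]
  have hqne : q ≠ 0 := hq.ne'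
  have hrne : r ≠ 0 := (Real.sqrt_pos.2 hs).ne'
  field_simp
  ring

lemma hasDerivAt_F1 (a b c s : ℝ) (hs : 0 < s) {P : ℝ} (hP : 0 < P) :
    HasDerivAt
      (fun x => ((c * x - a) * Gfun (Real.sqrt (s * x)) / Real.sqrt (s * x)
        + (a + b * Real.sqrt x + c * x) * Real.exp (-(s * x))) / (2 * x))
      (((3 * a - c * P) * (Gfun (Real.sqrt (s * P)) / Real.sqrt (s * P)
          - Real.exp (-(s * P))) / 2
        - s * P * (a + c * P) * Real.exp (-(s * P))
        - b * Real.sqrt P * (1 + 2 * (s * P)) / 2 * Real.exp (-(s * P))) / (2 * P ^ 2)) P := by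
  have hsP : 0 < s * P := mul_pos hs hP
  have hy : 0 < Real.sqrt (s * P) := Real.sqrt_pos.2 hsP
  have hq : 0 < Real.sqrt P := Real.sqrt_pos.2 hP
  have hCa : HasDerivAt (fun x : ℝ => c * x - a) c P := by
    simpa using ((hasDerivAt_id P).const_mul c).sub_const a
  have hE : HasDerivAt (fun x : ℝ => Real.exp (-(s * x))) (Real.exp (-(s * P)) * (-s)) P := by
    have h : HasDerivAt (fun x : ℝ => -(s * x)) (-s) P := by
      simpa [Pi.neg_def] using ((hasDerivAt_id P).const_mul s).neg
    exact h.exp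
  have hT := ((hCa.mul (hasDerivAt_Gcomp s hs hP)).mul (hasDerivAt_invsqrt s hs hP)).add
    ((hasDerivAt_Nfun a b c hP).mul hE)
  have hDen : HasDerivAt (fun x : ℝ => 2 * x) 2 P := by
    simpa using (hasDerivAt_id P).const_mul 2
  have hdiv := hT.div hDen (by positivity)
  have heq : (fun x : ℝ => ((c * x - a) * Gfun (Real.sqrt (s * x)) / Real.sqrt (s * x)
        + (a + b * Real.sqrt x + c * x) * Real.exp (-(s * x))) / (2 * x))
      = fun x => (((c * x - a) * Gfun (Real.sqrt (s * x))) * (Real.sqrt (s * x))⁻¹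
        + (a + b * Real.sqrt x + c * x) * Real.exp (-(s * x))) / (2 * x) := by
    funext x; ring
  rw [heq]
  refine hdiv.congr_deriv ?_
  simp only [Pi.mul_apply, Pi.add_apply]
  set q := Real.sqrt P with hqdef
  set r := Real.sqrt s with hrdef
  have hyv : Real.sqrt (s * P) = r * q := Real.sqrt_mul hs.le P
  have hq2 : q ^ 2 = P := Real.sq_sqrt hP.le
  have hr2 : r ^ 2 = s := Real.sq_sqrt hs.le
  rw [hyv, show s * P = r ^ 2 * q ^ 2 by rw [hq2, hr2], show P = q ^ 2 from hq2.symm,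
    show s = r ^ 2 from hr2.symm]
  have hqne : q ≠ 0 := hq.ne'
  have hrne : r ≠ 0 := (Real.sqrt_pos.2 hs).ne'
  field_simp
  ring

lemma Gfun_nonneg {y : ℝ} (hy : 0 ≤ y) : 0 ≤ Gfun y :=
  intervalIntegral.integral_nonneg hy fun u _ => (Real.exp_pos _).le

lemma Gfun_ge {y : ℝ} (hy : 0 ≤ y) : y * Real.exp (-y ^ 2) ≤ Gfun y := by
  have h : ∫ _u in (0:ℝ)..y, Real.exp (-y ^ 2) ≤ Gfun y := by
    apply intervalIntegral.integral_mono_on hy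
      intervalIntegrable_const (gauss_cont.intervalIntegrable _ _)
    intro u hu
    have h1 : u ^ 2 ≤ y ^ 2 := by nlinarith [hu.1, hu.2]
    exact Real.exp_le_exp.2 (by linarith)
  simpa using h

theorem special_function_monotone_concave (a b c s : ℝ)
    (ha : 0 ≤ a) (hb : 0 ≤ b) (hc : 0 ≤ c) (hs : 0 < s) :
    MonotoneOn
      (fun P => (a + b * Real.sqrt P + c * P) * (Real.sqrt Real.pi / 2) *
        erf (Real.sqrt (s * P)) / Real.sqrt (s * P))
      {P : ℝ | 0 < P ∧ a ≤ c * P} ∧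
    ConcaveOn ℝ {P : ℝ | 0 < P ∧ 3 * a ≤ c * P}
      (fun P => (a + b * Real.sqrt P + c * P) * (Real.sqrt Real.pi / 2) *
        erf (Real.sqrt (s * P)) / Real.sqrt (s * P)) := by
  have hpi : Real.sqrt Real.pi ≠ 0 := ne_of_gt (Real.sqrt_pos.2 Real.pi_pos)
  have herf : ∀ t : ℝ, Real.sqrt Real.pi / 2 * erf t = Gfun t := by
    intro t
    unfold erf Gfun
    field_simp
  have hfg : (fun P => (a + b * Real.sqrt P + c * P) * (Real.sqrt Real.pi / 2) *
        erf (Real.sqrt (s * P)) / Real.sqrt (s * P))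
      = fun P => (a + b * Real.sqrt P + c * P) * Gfun (Real.sqrt (s * P)) /
          Real.sqrt (s * P) := by
    funext P
    rw [mul_assoc, herf]
  rw [hfg]
  -- convexity of the sets
  have hconv : ∀ k : ℝ, Convex ℝ {P : ℝ | 0 < P ∧ k ≤ c * P} := by
    intro k x hx y hy t u ht hu htu
    simp only [Set.mem_setOf_eq, smul_eq_mul] at *
    constructor
    · rcases eq_or_lt_of_le ht with h | h
      · have hu1 : u = 1 := by linarith
        simpa [← h, hu1] using hy.1
      · nlinarith [mul_nonneg hu hy.1.le, hx.1]
    · have h1 := mul_le_mul_of_nonneg_left hx.2 ht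
      have h2 := mul_le_mul_of_nonneg_left hy.2 hu
      have h3 : t * k + u * k = k := by rw [← add_mul, htu, one_mul]
      nlinarith
  set g : ℝ → ℝ := fun x =>
    (a + b * Real.sqrt x + c * x) * Gfun (Real.sqrt (s * x)) / Real.sqrt (s * x) with hgdef
  set F1 : ℝ → ℝ := fun x =>
    ((c * x - a) * Gfun (Real.sqrt (s * x)) / Real.sqrt (s * x)
      + (a + b * Real.sqrt x + c * x) * Real.exp (-(s * x))) / (2 * x) with hF1def
  set F2 : ℝ → ℝ := fun x =>
    ((3 * a - c * x) * (Gfun (Real.sqrt (s * x)) / Real.sqrt (s * x)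
        - Real.exp (-(s * x))) / 2
      - s * x * (a + c * x) * Real.exp (-(s * x))
      - b * Real.sqrt x * (1 + 2 * (s * x)) / 2 * Real.exp (-(s * x))) / (2 * x ^ 2) with hF2def
  have hNnn : ∀ x : ℝ, 0 < x → 0 ≤ a + b * Real.sqrt x + c * x := by
    intro x hx
    have := Real.sqrt_nonneg x
    nlinarith
  constructor
  · -- monotone
    apply monotoneOn_of_hasDerivWithinAt_nonneg (f' := F1) (hconv a)
    · intro x hx
      exact (hasDerivAt_g a b c s hs hx.1).continuousAt.continuousWithinAt
    · intro x hx
      have hx' := interior_subset hx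
      exact (hasDerivAt_g a b c s hs hx'.1).hasDerivWithinAt
    · intro x hx
      have hx' : x ∈ {P : ℝ | 0 < P ∧ a ≤ c * P} := interior_subset hx
      simp only [Set.mem_setOf_eq] at hx'
      have hG0 : 0 ≤ Gfun (Real.sqrt (s * x)) := Gfun_nonneg (Real.sqrt_nonneg _)
      have h1 : 0 ≤ (c * x - a) * Gfun (Real.sqrt (s * x)) / Real.sqrt (s * x) :=
        div_nonneg (mul_nonneg (by linarith [hx'.2]) hG0) (Real.sqrt_nonneg _)
      have h2 : 0 ≤ (a + b * Real.sqrt x + c * x) * Real.exp (-(s * x)) :=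
        mul_nonneg (hNnn x hx'.1) (Real.exp_pos _).le
      have hx0 : (0:ℝ) < 2 * x := by linarith [hx'.1]
      exact div_nonneg (by linarith) hx0.le
  · -- concave
    apply concaveOn_of_hasDerivWithinAt2_nonpos (f' := F1) (f'' := F2) (hconv (3 * a))
    · intro x hx
      exact (hasDerivAt_g a b c s hs hx.1).continuousAt.continuousWithinAt
    · intro x hx
      have hx' := interior_subset hx
      exact (hasDerivAt_g a b c s hs hx'.1).hasDerivWithinAt
    · intro x hx
      have hx' := interior_subset hx
      exact (hasDerivAt_F1 a b c s hs hx'.1).hasDerivWithinAt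
    · intro x hx
      have hx' : x ∈ {P : ℝ | 0 < P ∧ 3 * a ≤ c * P} := interior_subset hx
      simp only [Set.mem_setOf_eq] at hx'
      have hxpos := hx'.1
      have hsx : 0 < s * x := mul_pos hs hxpos
      have hy : 0 < Real.sqrt (s * x) := Real.sqrt_pos.2 hsx
      have hEle : Real.exp (-(s * x)) ≤ Gfun (Real.sqrt (s * x)) / Real.sqrt (s * x) := by
        rw [le_div_iff₀ hy]
        have := Gfun_ge (Real.sqrt_nonneg (s * x))
        rw [Real.sq_sqrt hsx.le] at this
        linarith [this]
      have ht1 : (3 * a - c * x) * (Gfun (Real.sqrt (s * x)) / Real.sqrt (s * x)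
          - Real.exp (-(s * x))) / 2 ≤ 0 := by
        apply div_nonpos_of_nonpos_of_nonneg _ (by norm_num)
        exact mul_nonpos_of_nonpos_of_nonneg (by linarith [hx'.2]) (by linarith [hEle])
      have ht2 : 0 ≤ s * x * (a + c * x) * Real.exp (-(s * x)) := by
        have : 0 ≤ a + c * x := by nlinarith [hx'.2]
        positivity
      have ht3 : 0 ≤ b * Real.sqrt x * (1 + 2 * (s * x)) / 2 * Real.exp (-(s * x)) := by
        positivity
      have hden : (0:ℝ) < 2 * x ^ 2 := by positivity
      exact div_nonpos_of_nonpos_of_nonneg (by linarith) hden.le
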